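/- The quartic polynomial $p_0(x) = \sum_{l=0}^4 c_{0,l}\,((x-x_i)/\Delta x)^l$ with coefficients $c_{0,0} = -\tfrac{43}{384}\bar u_{i-1} + \tfrac{235}{192}\bar u_i - \tfrac{43}{384}\bar u_{i+1} - \tfrac{27}{64}\bar v_{i-1} + \tfrac{27}{64}\bar v_{i+1}$, $c_{0,1} = -\tfrac{63}{76}\bar u_{i-1} + \tfrac{63}{76}\bar u_{i+1} - \tfrac{75}{19}\bar v_{i-1} - \tfrac{75}{19}\bar v_{i+1}$, $c_{0,2} = \tfrac{23}{16}\bar u_{i-1} - \tfrac{23}{8}\bar u_i + \tfrac{23}{16}\bar u_{i+1} + \tfrac{45}{8}\bar v_{i-1} - \tfrac{45}{8}\bar v_{i+1}$, $c_{0,3} = \tfrac{5}{19}\bar u_{i-1} - \tfrac{5}{19}\bar u_{i+1} + \tfrac{60}{19}\bar v_{i-1} + \tfrac{60}{19}\bar v_{i+1}$, $c_{0,4} = -\tfrac58\bar u_{i-1} + \tfrac54\bar u_i - \tfrac58\bar u_{i+1} - \tfrac{15}{4}\bar v_{i-1} + \tfrac{15}{4}\bar v_{i+1}$ satisfies the five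 Hermite interpolation conditions: $\frac{1}{\Delta x}\int_{I_k} p_0\,dx = \bar u_k$ for $k = i-1, i, i+1$ and $\frac{1}{\Delta x}\int_{I_k} p_0 \cdot \frac{x-x_k}{\Delta x}\,dx = \bar v_k$ for $k = i-1, i+1$. -/

import Mathlib

open intervalIntegral

private lemma polyint (d0 d1 d2 d3 d4 d5 a b : ℝ) :
    (∫ t in a..b, (d0 + d1*t + d2*t^2 + d3*t^3 + d4*t^4 + d5*t^5))
      = (d0*b + d1*b^2/2 + d2*b^3/3 + d3*b^4/4 + d4*b^5/5 + d5*b^6/6)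
      - (d0*a + d1*a^2/2 + d2*a^3/3 + d3*a^4/4 + d4*a^5/5 + d5*a^6/6) := by
  have hder : ∀ x : ℝ, HasDerivAt
      (fun t => d0*t + d1*t^2/2 + d2*t^3/3 + d3*t^4/4 + d4*t^5/5 + d5*t^6/6)
      (d0 + d1*x + d2*x^2 + d3*x^3 + d4*x^4 + d5*x^5) x := by
    intro x
    have h1 := (hasDerivAt_id x).const_mul d0
    have h2 := ((hasDerivAt_pow 2 x).const_mul d1).div_const 2
    have h3 := ((hasDerivAt_pow 3 x).const_mul d2).div_const 3
    have h4 := ((hasDerivAt_pow 4 x).const_mul d3).div_const 4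
    have h5 := ((hasDerivAt_pow 5 x).const_mul d4).div_const 5
    have h6 := ((hasDerivAt_pow 6 x).const_mul d5).div_const 6
    have := ((((h1.add h2).add h3).add h4).add h5).add h6
    refine this.congr_deriv ?_
    push_cast
    ring
  rw [intervalIntegral.integral_eq_sub_of_hasDerivAt (fun x _ => hder x)]
  exact (Continuous.intervalIntegrable (by continuity) a b)

private lemma moment (Δx xi : ℝ) (hΔ : Δx ≠ 0) (d0 d1 d2 d3 d4 d5 a b : ℝ) :
    (∫ x in a..b, (d0 + d1*((x - xi)/Δx) + d2*((x - xi)/Δx)^2 + d3*((x - xi)/Δx)^3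
        + d4*((x - xi)/Δx)^4 + d5*((x - xi)/Δx)^5))
      = Δx * ((d0*((b-xi)/Δx) + d1*((b-xi)/Δx)^2/2 + d2*((b-xi)/Δx)^3/3
            + d3*((b-xi)/Δx)^4/4 + d4*((b-xi)/Δx)^5/5 + d5*((b-xi)/Δx)^6/6)
          - (d0*((a-xi)/Δx) + d1*((a-xi)/Δx)^2/2 + d2*((a-xi)/Δx)^3/3
            + d3*((a-xi)/Δx)^4/4 + d4*((a-xi)/Δx)^5/5 + d5*((a-xi)/Δx)^6/6)) := by
  have h1 : (∫ x in a..b, (d0 + d1*((x - xi)/Δx) + d2*((x - xi)/Δx)^2 + d3*((x - xi)/Δx)^3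
        + d4*((x - xi)/Δx)^4 + d5*((x - xi)/Δx)^5))
      = ∫ y in (a - xi)..(b - xi), (d0 + d1*(y/Δx) + d2*(y/Δx)^2 + d3*(y/Δx)^3
        + d4*(y/Δx)^4 + d5*(y/Δx)^5) :=
    intervalIntegral.integral_comp_sub_right
      (fun y => d0 + d1*(y/Δx) + d2*(y/Δx)^2 + d3*(y/Δx)^3 + d4*(y/Δx)^4 + d5*(y/Δx)^5) xi
  have h2 : (∫ y in (a - xi)..(b - xi), (d0 + d1*(y/Δx) + d2*(y/Δx)^2 + d3*(y/Δx)^3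
        + d4*(y/Δx)^4 + d5*(y/Δx)^5))
      = Δx • ∫ t in ((a-xi)/Δx)..((b-xi)/Δx), (d0 + d1*t + d2*t^2 + d3*t^3 + d4*t^4 + d5*t^5) :=
    intervalIntegral.integral_comp_div
      (fun t => d0 + d1*t + d2*t^2 + d3*t^3 + d4*t^4 + d5*t^5) hΔ
  rw [h1, h2, smul_eq_mul, polyint]

theorem stmt_3 (Δx xi : ℝ) (hΔ : 0 < Δx)
    (ubarm ubar ubarp vbarm vbarp : ℝ)
    (c0 c1 c2 c3 c4 : ℝ)
    (hc0 : c0 = -(43/384) * ubarm + (235/192) * ubar - (43/384) * ubarp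
      - (27/64) * vbarm + (27/64) * vbarp)
    (hc1 : c1 = -(63/76) * ubarm + (63/76) * ubarp - (75/19) * vbarm - (75/19) * vbarp)
    (hc2 : c2 = (23/16) * ubarm - (23/8) * ubar + (23/16) * ubarp
      + (45/8) * vbarm - (45/8) * vbarp)
    (hc3 : c3 = (5/19) * ubarm - (5/19) * ubarp + (60/19) * vbarm + (60/19) * vbarp)
    (hc4 : c4 = -(5/8) * ubarm + (5/4) * ubar - (5/8) * ubarp
      - (15/4) * vbarm + (15/4) * vbarp)
    (p0 : ℝ → ℝ)
    (hp0 : ∀ x, p0 x = c0 + c1 * ((x - xi)/Δx) + c2 * ((x - xi)/Δx)^2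
      + c3 * ((x - xi)/Δx)^3 + c4 * ((x - xi)/Δx)^4) :
    ((1/Δx) * ∫ x in (xi - Δx - Δx/2)..(xi - Δx + Δx/2), p0 x) = ubarm ∧
    ((1/Δx) * ∫ x in (xi - Δx/2)..(xi + Δx/2), p0 x) = ubar ∧
    ((1/Δx) * ∫ x in (xi + Δx - Δx/2)..(xi + Δx + Δx/2), p0 x) = ubarp ∧
    ((1/Δx) * ∫ x in (xi - Δx - Δx/2)..(xi - Δx + Δx/2),
        p0 x * ((x - (xi - Δx))/Δx)) = vbarm ∧
    ((1/Δx) * ∫ x in (xi + Δx - Δx/2)..(xi + Δx + Δx/2),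
        p0 x * ((x - (xi + Δx))/Δx)) = vbarp := by
  have hne : Δx ≠ 0 := hΔ.ne'
  have hu : ∀ a b : ℝ, (∫ x in a..b, p0 x)
      = ∫ x in a..b, (c0 + c1*((x - xi)/Δx) + c2*((x - xi)/Δx)^2 + c3*((x - xi)/Δx)^3
        + c4*((x - xi)/Δx)^4 + 0*((x - xi)/Δx)^5) := by
    intro a b
    refine intervalIntegral.integral_congr fun x _ => ?_
    rw [hp0]; ring
  have hvm : ∀ a b : ℝ, (∫ x in a..b, p0 x * ((x - (xi - Δx))/Δx))
      = ∫ x in a..b, (c0 + (c0+c1)*((x - xi)/Δx) + (c1+c2)*((x - xi)/Δx)^2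
        + (c2+c3)*((x - xi)/Δx)^3 + (c3+c4)*((x - xi)/Δx)^4 + c4*((x - xi)/Δx)^5) := by
    intro a b
    refine intervalIntegral.integral_congr fun x _ => ?_
    rw [hp0]; field_simp; ring
  have hvp : ∀ a b : ℝ, (∫ x in a..b, p0 x * ((x - (xi + Δx))/Δx))
      = ∫ x in a..b, (-c0 + (c0-c1)*((x - xi)/Δx) + (c1-c2)*((x - xi)/Δx)^2
        + (c2-c3)*((x - xi)/Δx)^3 + (c3-c4)*((x - xi)/Δx)^4 + c4*((x - xi)/Δx)^5) := by
    intro a b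
    refine intervalIntegral.integral_congr fun x _ => ?_
    rw [hp0]; field_simp; ring
  have e1 : (xi - Δx - Δx/2 - xi)/Δx = -(3/2) := by field_simp; ring
  have e2 : (xi - Δx + Δx/2 - xi)/Δx = -(1/2) := by field_simp; ring
  have e3 : (xi - Δx/2 - xi)/Δx = -(1/2) := by field_simp; ring
  have e4 : (xi + Δx/2 - xi)/Δx = (1/2 : ℝ) := by field_simp; ring
  have e5 : (xi + Δx - Δx/2 - xi)/Δx = (1/2 : ℝ) := by field_simp; ring
  have e6 : (xi + Δx + Δx/2 - xi)/Δx = (3/2 : ℝ) := by field_simp; ring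
  refine ⟨?_, ?_, ?_, ?_, ?_⟩
  · rw [hu, moment Δx xi hne]; simp only [e1,e2,e3,e4,e5,e6]; rw [← mul_assoc, one_div, inv_mul_cancel₀ hne, one_mul, hc0, hc1, hc2, hc3, hc4]; ring
  · rw [hu, moment Δx xi hne]; simp only [e1,e2,e3,e4,e5,e6]; rw [← mul_assoc, one_div, inv_mul_cancel₀ hne, one_mul, hc0, hc1, hc2, hc3, hc4]; ring
  · rw [hu, moment Δx xi hne]; simp only [e1,e2,e3,e4,e5,e6]; rw [← mul_assoc, one_div, inv_mul_cancel₀ hne, one_mul, hc0, hc1, hc2, hc3, hc4]; ring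
  · rw [hvm, moment Δx xi hne]; simp only [e1,e2,e3,e4,e5,e6]; rw [← mul_assoc, one_div, inv_mul_cancel₀ hne, one_mul, hc0, hc1, hc2, hc3, hc4]; ring
  · rw [hvp, moment Δx xi hne]; simp only [e1,e2,e3,e4,e5,e6]; rw [← mul_assoc, one_div, inv_mul_cancel₀ hne, one_mul, hc0, hc1, hc2, hc3, hc4]; ring
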